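/- If X and Y are topological spaces with X → (Y)¹₂, then PX → (PY)¹₂, where PZ denotes the set Z with the smallest topology refining that of Z in which countable intersections of open sets are open (the P-space coreflection). -/
import Mathlib


/-- The `P`-space coreflection of a topology `t`: the smallest topology refining `t` in
which countable intersections of `t`-open sets are open. -/
def PTopology {Z : Type*} (t : TopologicalSpace Z) : TopologicalSpace Z :=
  TopologicalSpace.generateFrom
    {s : Set Z | ∃ F : ℕ → Set Z, (∀ n, t.IsOpen (F n)) ∧ s = ⋂ n, F n}

/-- `CopiesIn Y tY tX P`: with respect to topologies `tY` on `Y` and `tX` on `X`,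
the set `P ⊆ X` contains a subspace homeomorphic to `Y`. -/
def CopiesIn (Y : Type*) (tY : TopologicalSpace Y) {X : Type*}
    (tX : TopologicalSpace X) (P : Set X) : Prop :=
  ∃ s : Set X, s ⊆ P ∧
    Nonempty (@Homeomorph Y s tY (TopologicalSpace.induced (Subtype.val : s → X) tX))

lemma PTopology_induced {Z X : Type*} (f : Z → X) (t : TopologicalSpace X) :
    PTopology (t.induced f) = (PTopology t).induced f := by
  unfold PTopology
  rw [induced_generateFrom_eq]
  congr 1
  ext s
  constructor
  · rintro ⟨F, hF, rfl⟩
    choose U hU hUF using fun n => (isOpen_induced_iff).1 (hF n)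
    refine ⟨⋂ n, U n, ⟨U, hU, rfl⟩, ?_⟩
    simp only [Set.preimage_iInter]
    exact Set.iInter_congr hUF
  · rintro ⟨_, ⟨F, hF, rfl⟩, rfl⟩
    exact ⟨fun n => f ⁻¹' F n, fun n => ⟨F n, hF n, rfl⟩, Set.preimage_iInter⟩

def homeomorph_PTopology {Y S : Type*} (tY : TopologicalSpace Y) (tS : TopologicalSpace S)
    (e : @Homeomorph Y S tY tS) :
    @Homeomorph Y S (PTopology tY) (PTopology tS) := by
  have hind : tY = tS.induced (@Homeomorph.toEquiv Y S tY tS e) :=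
    (@Homeomorph.isInducing Y S tY tS e).eq_induced
  letI := PTopology tY
  letI := PTopology tS
  exact Equiv.toHomeomorphOfIsInducing (@Homeomorph.toEquiv Y S tY tS e) ⟨by
    rw [← PTopology_induced]
    exact congrArg PTopology hind⟩

/-- If `X → (Y)¹₂` then `PX → (PY)¹₂`, where `PZ` is the `P`-space coreflection. -/
theorem arrow_PTopology (X Y : Type*) (tX : TopologicalSpace X) (tY : TopologicalSpace Y)
    (h : ∀ P₀ P₁ : Set X, P₀ ∪ P₁ = Set.univ →
      CopiesIn Y tY tX P₀ ∨ CopiesIn Y tY tX P₁) :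
    ∀ P₀ P₁ : Set X, P₀ ∪ P₁ = Set.univ →
      CopiesIn Y (PTopology tY) (PTopology tX) P₀ ∨
        CopiesIn Y (PTopology tY) (PTopology tX) P₁ := by
  have key : ∀ P : Set X, CopiesIn Y tY tX P →
      CopiesIn Y (PTopology tY) (PTopology tX) P := by
    rintro P ⟨s, hs, ⟨e⟩⟩
    refine ⟨s, hs, ?_⟩
    rw [← PTopology_induced]
    exact ⟨homeomorph_PTopology _ _ e⟩
  intro P₀ P₁ hP
  rcases h P₀ P₁ hP with h0 | h0
  · exact Or.inl (key _ h0)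
  · exact Or.inr (key _ h0)
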